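/- Let λ > 0, y ∈ ℝ, a ∈ ℝ, and b ∈ ℝ with b² ≤ a²/λ. Then the function f : ℝ → ℝ defined by f(x) = (1/2)(y − a x)² + λ φ_b(x) is convex on ℝ. -/

import Mathlib

/-- The Huber function: `s(x) = x²/2` for `|x| ≤ 1` and `s(x) = |x| - 1/2` for `|x| ≥ 1`. -/
noncomputable def huber (x : ℝ) : ℝ :=
  if |x| ≤ 1 then x ^ 2 / 2 else |x| - 1 / 2

/-- The scaled Huber function: `s_b(x) = s(b² x)/b²` for `b ≠ 0`, and `s_0 = 0`. -/
noncomputable def scaledHuber (b x : ℝ) : ℝ :=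
  if b = 0 then 0 else huber (b ^ 2 * x) / b ^ 2

/-- The scaled MC penalty: `φ_b(x) = |x| - s_b(x)`. -/
noncomputable def mcPenalty (b x : ℝ) : ℝ :=
  |x| - scaledHuber b x

lemma convexOn_abs_real : ConvexOn ℝ (Set.univ) (fun x : ℝ => |x|) := by
  exact (convexOn_univ_norm (E := ℝ))

lemma aux_convex (c d e lam k t : ℝ) (hc : 0 ≤ c) (hlam : 0 ≤ lam) (hk : 0 ≤ k) :
    ConvexOn ℝ Set.univ
      (fun x : ℝ => c * x ^ 2 + (d * x + e) + lam * |x| + k * (max (|x| - t) 0) ^ 2) := by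
  have h1 : ConvexOn ℝ Set.univ (fun x : ℝ => c * x ^ 2) := by
    simpa [smul_eq_mul] using (Even.convexOn_pow (even_two)).smul hc
  have h2 : ConvexOn ℝ Set.univ (fun x : ℝ => d * x + e) := by
    refine ⟨convex_univ, fun x _ y _ p q hp hq hpq => ?_⟩
    simp only [smul_eq_mul]
    apply le_of_eq
    linear_combination (-e) * hpq
  have h3 : ConvexOn ℝ Set.univ (fun x : ℝ => lam * |x|) := by
    simpa [smul_eq_mul] using convexOn_abs_real.smul hlam
  have hu : ConvexOn ℝ Set.univ (fun x : ℝ => max (|x| - t) 0) := by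
    have := (convexOn_abs_real.add (convexOn_const (-t) convex_univ)).sup
      (convexOn_const 0 convex_univ)
    simpa [sub_eq_add_neg, Pi.sup_def] using this
  have h4 : ConvexOn ℝ Set.univ (fun x : ℝ => k * (max (|x| - t) 0) ^ 2) := by
    have := (hu.pow (fun x _ => le_max_right _ _) 2).smul hk
    simpa [smul_eq_mul, Pi.pow_def] using this
  exact ((h1.add h2).add h3).add h4

/-- If `b² ≤ a²/λ`, then `f(x) = (1/2)(y - a x)² + λ φ_b(x)` is convex. -/
theorem mcPenalty_leastSquares_convex (lam y a b : ℝ) (hlam : 0 < lam)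
    (hb : b ^ 2 ≤ a ^ 2 / lam) :
    ConvexOn ℝ Set.univ (fun x : ℝ => (1 / 2) * (y - a * x) ^ 2 + lam * mcPenalty b x) := by
  by_cases hb0 : b = 0
  · subst hb0
    have heq : (fun x : ℝ => (1 / 2) * (y - a * x) ^ 2 + lam * mcPenalty 0 x)
        = fun x : ℝ => (a ^ 2 / 2) * x ^ 2 + ((-(a * y)) * x + y ^ 2 / 2) + lam * |x|
          + 0 * (max (|x| - 0) 0) ^ 2 := by
      funext x
      simp only [mcPenalty, scaledHuber, if_pos rfl, if_true, ite_self]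
      ring
    rw [heq]
    exact aux_convex _ _ _ _ _ _ (by positivity) hlam.le le_rfl
  · have hb2 : (0:ℝ) < b ^ 2 := by positivity
    have hc : 0 ≤ (a ^ 2 - lam * b ^ 2) / 2 := by
      have h := (le_div_iff₀ hlam).mp hb
      nlinarith
    have heq : (fun x : ℝ => (1 / 2) * (y - a * x) ^ 2 + lam * mcPenalty b x)
        = fun x : ℝ => ((a ^ 2 - lam * b ^ 2) / 2) * x ^ 2 + ((-(a * y)) * x + y ^ 2 / 2)
          + lam * |x| + (lam * b ^ 2 / 2) * (max (|x| - 1 / b ^ 2) 0) ^ 2 := by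
      funext x
      simp only [mcPenalty, scaledHuber, if_neg hb0, huber]
      rcases le_or_gt |b ^ 2 * x| 1 with h | h
      · rw [if_pos h]
        have hx : |x| ≤ 1 / b ^ 2 := by
          rw [abs_mul, abs_of_pos hb2] at h
          rw [le_div_iff₀ hb2]; linarith [h]
        rw [max_eq_right (by linarith)]
        field_simp
        ring
      · rw [if_neg (not_le.mpr h)]
        have hx : 1 / b ^ 2 ≤ |x| := by
          rw [abs_mul, abs_of_pos hb2] at h
          rw [div_le_iff₀ hb2]; nlinarith
        rw [max_eq_left (by linarith), abs_mul, abs_of_pos hb2]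
        rcases abs_cases x with ⟨h1, _⟩ | ⟨h1, _⟩ <;> rw [h1] <;> field_simp <;> ring
    rw [heq]
    exact aux_convex _ _ _ _ _ _ hc hlam.le (by positivity)
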